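/- Let (X,0) be a pointed convex Boolean metric space over a Boolean ring B, let R = {x₁,…,xₙ} be a referential of (X,0), and let x ∈ X. Then there is a unique tuple (a₁,…,aₙ) ∈ Bⁿ such that: (1) aᵢaⱼ = 0 whenever i ≠ j; (2) x is the convex combination of 0, x₁,…,xₙ with coefficients a₀, a₁,…,aₙ, where a₀ = 1 + a₁ + ⋯ + aₙ; and (3) aᵢ ≤ |xᵢ| for i = 1,…,n. -/
import Mathlib


/-- The order on a Boolean ring: `a ≤ b` iff `a * b = a`. -/
def ble {B : Type} [BooleanRing B] (a b : B) : Prop := a * b = a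

/-- The join on a Boolean ring: `a ∨ b = a + b + a * b`. -/
def bjoin {B : Type} [BooleanRing B] (a b : B) : B := a + b + a * b

/-- A Boolean metric space over a Boolean ring `B`: `d x y = 0` iff `x = y`,
`d` is symmetric, and `d x z ≤ d x y ∨ d y z`. -/
structure BooleanMetric (B : Type) [BooleanRing B] (X : Type) where
  d : X → X → B
  d_eq_zero : ∀ x y, d x y = 0 ↔ x = y
  d_symm : ∀ x y, d x y = d y x
  d_tri : ∀ x y z, ble (d x z) (bjoin (d x y) (d y z))

/-- The coefficients `a i` have pairwise zero products. -/
def PairwiseOrthCoeffs {B : Type} [BooleanRing B] {k : ℕ} (a : Fin k → B) : Prop :=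
  ∀ i j, i ≠ j → a i * a j = 0

/-- `x` is a convex combination of `x₁, …, xₖ` with coefficients `a₁, …, aₖ`,
i.e. `aᵢ · d(x, xᵢ) = 0` for all `i`. -/
def IsConvComb {B X : Type} [BooleanRing B] (m : BooleanMetric B X) {k : ℕ}
    (a : Fin k → B) (xs : Fin k → X) (x : X) : Prop :=
  ∀ i, a i * m.d x (xs i) = 0

/-- A subset `S` is convex: every convex combination of points of `S` (with pairwise
disjoint coefficients summing to `1`) exists in `S`. -/
def IsConvexSubspace {B X : Type} [BooleanRing B] (m : BooleanMetric B X) (S : Set X) : Prop :=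
  ∀ (k : ℕ) (a : Fin k → B) (xs : Fin k → X), (∀ i, xs i ∈ S) →
    PairwiseOrthCoeffs a → (∑ i, a i) = 1 → ∃ x ∈ S, IsConvComb m a xs x

/-- A subset `S` is a CFG-space: it is convex and there are finitely many points of `S`
of which every point of `S` is a convex combination. -/
def IsCFGSubspace {B X : Type} [BooleanRing B] (m : BooleanMetric B X) (S : Set X) : Prop :=
  IsConvexSubspace m S ∧
  ∃ (k : ℕ) (xs : Fin k → X), (∀ i, xs i ∈ S) ∧
    ∀ x ∈ S, ∃ a : Fin k → B, PairwiseOrthCoeffs a ∧ (∑ i, a i) = 1 ∧ IsConvComb m a xs x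

/-- A contractive map: `d(f x, f y) ≤ d(x, y)`. -/
def Contractive {B X Y : Type} [BooleanRing B] (mX : BooleanMetric B X) (mY : BooleanMetric B Y)
    (f : X → Y) : Prop :=
  ∀ x y, ble (mY.d (f x) (f y)) (mX.d x y)

/-- `sm a x` is the convex combination `a x + (a+1) 0` of `x` and the base point `z`
with coefficients `a` and `a + 1`. -/
def IsScalarMul {B X : Type} [BooleanRing B] (m : BooleanMetric B X) (z : X)
    (sm : B → X → X) : Prop :=
  ∀ a x, a * m.d (sm a x) x = 0 ∧ (a + 1) * m.d (sm a x) z = 0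

/-- `x ⊥ y`, i.e. `x ⋆ y = (d(x,y)+1) x = 0`. -/
def Orth {B X : Type} [BooleanRing B] (m : BooleanMetric B X) (z : X) (sm : B → X → X)
    (x y : X) : Prop :=
  sm (m.d x y + 1) x = z

/-- `x` is the convex combination of `0, x₁, …, xₖ` with coefficients
`a₀ = 1 + a₁ + ⋯ + aₖ, a₁, …, aₖ`. -/
def ConvCombWithZero {B X : Type} [BooleanRing B] (m : BooleanMetric B X) (z : X) {k : ℕ}
    (a : Fin k → B) (xs : Fin k → X) (x : X) : Prop :=
  PairwiseOrthCoeffs a ∧ (∀ i, a i * m.d x (xs i) = 0) ∧ (1 + ∑ i, a i) * m.d x z = 0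

/-- `x₁, …, xₖ` is a referential of `(X, z)`: the `xᵢ` are nonzero, pairwise orthogonal,
and every point of `X` is a convex combination of `0, x₁, …, xₖ`. -/
def IsReferential {B X : Type} [BooleanRing B] (m : BooleanMetric B X) (z : X)
    (sm : B → X → X) {k : ℕ} (xs : Fin k → X) : Prop :=
  (∀ i, xs i ≠ z) ∧ (∀ i j, i ≠ j → Orth m z sm (xs i) (xs j)) ∧
  ∀ x : X, ∃ a : Fin k → B, ConvCombWithZero m z a xs x

/-- The whole space is a convex closure of the subset `S`: it is convex and every point
is a convex combination of points of `S`. -/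
def IsConvexClosure {B X : Type} [BooleanRing B] (m : BooleanMetric B X) (S : Set X) : Prop :=
  IsConvexSubspace m Set.univ ∧
  ∀ x : X, ∃ (k : ℕ) (a : Fin k → B) (xs : Fin k → X),
    (∀ i, xs i ∈ S) ∧ PairwiseOrthCoeffs a ∧ (∑ i, a i) = 1 ∧ IsConvComb m a xs x

/-- A finite set `R` is a referential of `(X, z)` (set version). -/
def IsReferentialSet {B X : Type} [BooleanRing B] (m : BooleanMetric B X) (z : X)
    (sm : B → X → X) (R : Finset X) : Prop :=
  z ∉ R ∧ (∀ x ∈ R, ∀ y ∈ R, x ≠ y → Orth m z sm x y) ∧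
  ∀ u : X, ∃ a : X → B,
    (∀ x ∈ R, ∀ y ∈ R, x ≠ y → a x * a y = 0) ∧
    (∀ x ∈ R, a x * m.d u x = 0) ∧ (1 + ∑ x ∈ R, a x) * m.d u z = 0




open Finset in
/-- If `e * d(x,y) = 0` and `e * d(z,y) = e` then `e * d(z,x) = e`. -/
private lemma bkey1 {B X : Type} [BooleanRing B] (m : BooleanMetric B X)
    (z x y : X) (e : B) (h1 : e * m.d x y = 0) (h2 : e * m.d z y = e) :
    e * m.d z x = e := by
  have t := m.d_tri z x y
  unfold ble bjoin at t
  have h3 : e * (m.d z y * (m.d z x + m.d x y + m.d z x * m.d x y)) = e * m.d z y := by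
    rw [t]
  linear_combination h3 + (1 - (m.d z x + m.d x y + m.d z x * m.d x y)) * h2
    - (1 + m.d z x) * h1

theorem stmt8 {B X : Type} [BooleanRing B] (m : BooleanMetric B X)
    (hconv : IsConvexSubspace m Set.univ) (z : X)
    (sm : B → X → X) (hsm : IsScalarMul m z sm)
    {k : ℕ} (xs : Fin k → X) (href : IsReferential m z sm xs) (x : X) :
    ∃! a : Fin k → B,
      ConvCombWithZero m z a xs x ∧ ∀ i, ble (a i) (m.d z (xs i)) := by
  obtain ⟨hne, horth, hall⟩ := href
  set c : Fin k → B := fun i => m.d z (xs i) * (m.d x (xs i) + 1) with hc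
  have hcd : ∀ i, c i * m.d x (xs i) = 0 := by
    intro i
    simp only [hc]
    linear_combination m.d z (xs i) * BooleanRing.mul_self (m.d x (xs i))
      + BooleanRing.add_self (m.d z (xs i) * m.d x (xs i))
  have hcble : ∀ i, c i * m.d z (xs i) = c i := by
    intro i
    simp only [hc]
    linear_combination (m.d x (xs i) + 1) * BooleanRing.mul_self (m.d z (xs i))
  -- orthogonality: |x_i| = |x_i| * d(x_i, x_j) for i ≠ j
  have hF0 : ∀ i j, i ≠ j → m.d z (xs i) * m.d (xs i) (xs j) = m.d z (xs i) := by
    intro i j hij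
    have ho := horth i j hij
    unfold Orth at ho
    have h := (hsm (m.d (xs i) (xs j) + 1) (xs i)).1
    rw [ho] at h
    linear_combination (-1 : B) * h
      + BooleanRing.add_self (m.d z (xs i) * m.d (xs i) (xs j))
  -- triangle consequence : d(x_i,x_j) * (d(x,x_i)+1) * (d(x,x_j)+1) = 0
  have hF4 : ∀ i j, m.d (xs i) (xs j) * (m.d x (xs i) + 1) * (m.d x (xs j) + 1) = 0 := by
    intro i j
    have t := m.d_tri (xs i) x (xs j)
    unfold ble bjoin at t
    rw [m.d_symm (xs i) x] at t
    linear_combination t + BooleanRing.add_self (m.d (xs i) (xs j))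
  have hcc : ∀ i j, i ≠ j → c i * c j = 0 := by
    intro i j hij
    have h0 := hF0 i j hij
    have h4 := hF4 i j
    simp only [hc]
    linear_combination (-(m.d z (xs j) * (m.d x (xs i) + 1) * (m.d x (xs j) + 1))) * h0
      + m.d z (xs i) * m.d z (xs j) * h4
  have hCx : ∀ i, c i * m.d z x = c i := fun i =>
    bkey1 m z x (xs i) (c i) (hcd i) (hcble i)
  have hCxz : ∀ i, c i * m.d x z = c i := fun i => by
    rw [← m.d_symm z x]; exact hCx i
  -- for any convex-combination tuple `a`, `a j * d(x,z) = c j`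
  have hmain : ∀ a : Fin k → B, ConvCombWithZero m z a xs x →
      ∀ j, a j * m.d x z = c j := by
    rintro a ⟨hpo, hacd, haz⟩ j
    have hdz : m.d x z = ∑ l, a l * m.d x z := by
      rw [add_mul, one_mul, Finset.sum_mul] at haz
      linear_combination haz - BooleanRing.add_self (∑ l, a l * m.d x z)
    have hca : ∀ l, l ≠ j → c j * a l = 0 := by
      intro l hlj
      have h0 := hF0 j l (Ne.symm hlj)
      have t := m.d_tri (xs j) x (xs l)
      unfold ble bjoin at t
      rw [m.d_symm (xs j) x] at t
      have s1 : a l * (m.d (xs j) (xs l) * m.d x (xs j)) = a l * m.d (xs j) (xs l) := by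
        linear_combination a l * t
          - m.d (xs j) (xs l) * (1 + m.d x (xs j)) * hacd l
      simp only [hc]
      linear_combination (-(m.d x (xs j) * a l + a l)) * h0 + m.d z (xs j) * s1
        + BooleanRing.add_self (m.d z (xs j) * (m.d (xs j) (xs l) * a l))
    have hcaj : c j * a j = a j * m.d z (xs j) := by
      simp only [hc]
      linear_combination m.d z (xs j) * hacd j
    have s5 : a j * m.d x z = a j * m.d x z * m.d z (xs j) := by
      have t2 := m.d_tri x (xs j) z
      unfold ble bjoin at t2
      rw [m.d_symm (xs j) z] at t2
      linear_combination (-(a j)) * t2 + m.d x z * (1 + m.d z (xs j)) * hacd j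
    have s6 : c j = a j * m.d z (xs j) * m.d x z :=
      calc c j = c j * m.d x z := (hCxz j).symm
        _ = c j * ∑ l, a l * m.d x z := by rw [← hdz]
        _ = ∑ l, c j * (a l * m.d x z) := Finset.mul_sum _ _ _
        _ = c j * (a j * m.d x z) :=
            Finset.sum_eq_single_of_mem j (Finset.mem_univ j) (fun l _ hlj => by
              rw [show c j * (a l * m.d x z) = (c j * a l) * m.d x z by ring,
                hca l hlj, zero_mul])
        _ = a j * m.d z (xs j) * m.d x z := by
            rw [show c j * (a j * m.d x z) = (c j * a j) * m.d x z by ring, hcaj]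
    rw [s6]
    linear_combination s5
  refine ⟨c, ⟨⟨hcc, hcd, ?_⟩, fun i => hcble i⟩, ?_⟩
  · -- (1 + ∑ c) * d(x,z) = 0
    obtain ⟨a0, ha0⟩ := hall x
    have hdz0 : m.d x z = ∑ l, a0 l * m.d x z := by
      have haz := ha0.2.2
      rw [add_mul, one_mul, Finset.sum_mul] at haz
      linear_combination haz - BooleanRing.add_self (∑ l, a0 l * m.d x z)
    have h3 : m.d x z = ∑ l, c l :=
      calc m.d x z = ∑ l, a0 l * m.d x z := hdz0
        _ = ∑ l, c l := Finset.sum_congr rfl (fun l _ => hmain a0 ha0 l)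
    rw [add_mul, one_mul, Finset.sum_mul,
      Finset.sum_congr rfl (fun l _ => hCxz l), ← h3]
    exact BooleanRing.add_self _
  · -- uniqueness
    rintro a ⟨hacc, hble⟩
    funext i
    have h1 : a i * m.d x z = c i := hmain a hacc i
    have h2 : a i * m.d z x = a i :=
      bkey1 m z x (xs i) (a i) (hacc.2.1 i) (hble i)
    rw [← h1, ← m.d_symm z x, h2]
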